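/- n_k(2k-1, k-1) = 2k-1 for all integers k ≥ 2: there exists a k-ary code of length 2k-1 and size 2k-1 in which every two distinct codewords x, y satisfy N(x,y) ≥ k-1 and N(y,x) ≥ k-1, and no shorter k-ary code of size 2k-1 has this property. -/

import Mathlib

/-- `Ncount x y` is the number of positions where `x` exceeds `y`. -/
def Ncount {n q : ℕ} (x y : Fin n → Fin q) : ℕ :=
  (Finset.univ.filter fun i => y i < x i).card

lemma tent_aux {k d j : ℕ} (hk : 2 ≤ k) (hd1 : 1 ≤ d) (hd2 : d ≤ 2*k-2)
    (hj1 : k - (d+1)/2 ≤ j) (hj2 : j + (d+1)/2 ≤ 2*k-2) :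
    min ((j+d) % (2*k-1)) (2*k-2 - (j+d) % (2*k-1)) < min j (2*k-2-j) := by
  have h2 : (j+d) % (2*k-1) = if j + d < 2*k-1 then j+d else j+d-(2*k-1) := by
    split
    · exact Nat.mod_eq_of_lt (by omega)
    · rw [Nat.mod_eq_sub_mod (by omega), Nat.mod_eq_of_lt (by omega)]
  split at h2 <;> omega

def tentWord (k : ℕ) (hk : 2 ≤ k) (a : Fin (2*k-1)) : Fin (2*k-1) → Fin k :=
  fun i => ⟨min (i+a).val (2*k-2-(i+a).val), by have := (i+a).is_lt; omega⟩

lemma tentWord_inj {k : ℕ} (hk : 2 ≤ k) : Function.Injective (tentWord k hk) := by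
  haveI : NeZero (2*k-1) := ⟨by omega⟩
  intro a b h
  set i : Fin (2*k-1) := (⟨k-1, by omega⟩ : Fin (2*k-1)) - a with hi
  have hia : i + a = ⟨k-1, by omega⟩ := sub_add_cancel _ _
  have h1 : ((i+a) : Fin (2*k-1)).val = k-1 := by rw [hia]
  have hval : min (i+a).val (2*k-2-(i+a).val) = min (i+b).val (2*k-2-(i+b).val) :=
    congrArg Fin.val (congrFun h i)
  have hv : (i+b).val < 2*k-1 := (i+b).is_lt
  have hkb : (i+b).val = (i+a).val := by omega
  have : i + b = i + a := Fin.ext hkb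
  exact (add_left_cancel this).symm

lemma tent_dist {k : ℕ} (hk : 2 ≤ k) (a b : Fin (2*k-1)) (hab : a ≠ b) :
    k - 1 ≤ Ncount (tentWord k hk a) (tentWord k hk b) := by
  haveI : NeZero (2*k-1) := ⟨by omega⟩
  set d : ℕ := (b - a).val with hd
  have hba : b - a ≠ 0 := sub_ne_zero.mpr (Ne.symm hab)
  have hd1 : 1 ≤ d := by
    rcases Nat.eq_zero_or_pos d with h|h
    · exact absurd (Fin.ext h : b - a = 0) hba
    · exact h
  have hd2 : d ≤ 2*k-2 := by have := (b-a).is_lt; omega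
  set e : ℕ := (d+1)/2 with he
  have he1 : 1 ≤ e := by omega
  have he2 : e ≤ k-1 := by omega
  set f : ℕ → Fin (2*k-1) :=
    fun j => (⟨j % (2*k-1), Nat.mod_lt _ (by omega)⟩ : Fin (2*k-1)) - a with hf
  have hcard : (Finset.Ico (k-e) (2*k-1-e)).card = k - 1 := by
    rw [Nat.card_Ico]; omega
  rw [← hcard]
  apply Finset.card_le_card_of_injOn f
  · intro j hj
    simp only [Finset.mem_coe, Finset.mem_Ico] at hj
    have hjlt : j < 2*k-1 := by omega
    have hjm : j % (2*k-1) = j := Nat.mod_eq_of_lt hjlt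
    simp only [Finset.mem_coe, Finset.mem_filter, Finset.mem_univ, true_and]
    have hfa : f j + a = ⟨j % (2*k-1), Nat.mod_lt _ (by omega)⟩ := sub_add_cancel _ _
    have hfb : f j + b = ⟨j % (2*k-1), Nat.mod_lt _ (by omega)⟩ + (b - a) := by
      simp only [hf]; abel
    have hva : (f j + a).val = j := by rw [hfa]; exact hjm
    have hvb : (f j + b).val = (j + d) % (2*k-1) := by
      rw [hfb, Fin.add_def]
      simp [hjm]
      rw [hd]
    rw [Fin.lt_def]
    show min (f j + b).val (2*k-2-(f j + b).val) < min (f j + a).val (2*k-2-(f j + a).val)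
    rw [hva, hvb]
    exact tent_aux hk hd1 hd2 (by omega) (by omega)
  · intro j hj j' hj' hjj
    simp only [Finset.mem_coe, Finset.mem_Ico] at hj hj'
    have := sub_left_injective hjj
    have := congrArg Fin.val this
    simp only [Fin.val_mk] at this
    rw [Nat.mod_eq_of_lt (by omega), Nat.mod_eq_of_lt (by omega)] at this
    exact this

lemma three_le_sq (m : ℕ) : 3*m ≤ m*m+2 := by
  rcases m with _|n
  · simp
  · rcases n with _|n
    · simp
    · nlinarith

lemma fiber_sum {α : Type*} [DecidableEq α] {k : ℕ} (C : Finset α) (h : α → Fin k)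
    (g : Fin k → ℕ) :
    ∑ x ∈ C, g (h x) = ∑ v : Fin k, (C.filter (fun x => h x = v)).card * g v := by
  rw [← Finset.sum_fiberwise C h (fun x => g (h x))]
  refine Finset.sum_congr rfl fun v _ => ?_
  rw [Finset.sum_congr rfl (fun x hx => by rw [(Finset.mem_filter.mp hx).2]),
    Finset.sum_const, smul_eq_mul]

lemma final_ineq {k A D : ℕ} (hk : 2 ≤ k) (h1 : A + A + D = (2*k-1)*(2*k-1))
    (h2 : 4*k-3 ≤ D) : A ≤ 2*((k-1)*(k-1)) := by
  obtain ⟨j, rfl⟩ : ∃ j, k = j + 2 := ⟨k - 2, by omega⟩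
  have e1 : 2*(j+2)-1 = 2*j+3 := by omega
  have e2 : 4*(j+2)-3 = 4*j+5 := by omega
  have e3 : (j+2)-1 = j+1 := by omega
  rw [e1] at h1; rw [e2] at h2; rw [e3]
  nlinarith

lemma coord_bound {k n : ℕ} (hk : 2 ≤ k) (C : Finset (Fin n → Fin k))
    (hcard : C.card = 2*k-1) (i : Fin n) :
    (∑ x ∈ C, ∑ y ∈ C, if y i < x i then 1 else 0) ≤ 2*((k-1)*(k-1)) := by
  classical
  set m : Fin k → ℕ := fun v => (C.filter (fun x => x i = v)).card with hm
  have hsum : ∑ v : Fin k, m v = 2*k-1 := by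
    have := fiber_sum C (fun x => x i) (fun _ => 1)
    simp only [Finset.sum_const, smul_eq_mul, mul_one] at this
    rw [← this, hcard]
  have step1 : ∀ x : Fin n → Fin k, (∑ y ∈ C, if y i < x i then 1 else 0)
      = ∑ w : Fin k, m w * (if w < x i then 1 else 0) :=
    fun x => fiber_sum C (fun y => y i) (fun w => if w < x i then 1 else 0)
  have hrw : (∑ x ∈ C, ∑ y ∈ C, if y i < x i then 1 else 0)
      = ∑ v : Fin k, ∑ w : Fin k, m v * (m w * (if w < v then 1 else 0)) := by
    rw [Finset.sum_congr rfl (fun x _ => step1 x),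
      fiber_sum C (fun x => x i) (fun v => ∑ w : Fin k, m w * (if w < v then 1 else 0))]
    exact Finset.sum_congr rfl fun v _ => Finset.mul_sum _ _ _
  set A : ℕ := ∑ v : Fin k, ∑ w : Fin k, m v * (m w * (if w < v then 1 else 0)) with hA
  set B : ℕ := ∑ v : Fin k, ∑ w : Fin k, m v * (m w * (if v < w then 1 else 0)) with hB
  set D : ℕ := ∑ v : Fin k, m v * m v with hD
  have hAB : A = B := by
    rw [hA, Finset.sum_comm]
    exact Finset.sum_congr rfl fun v _ => Finset.sum_congr rfl fun w _ => by ring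
  have hDalt : D = ∑ v : Fin k, ∑ w : Fin k, m v * (m w * (if w = v then 1 else 0)) := by
    refine Finset.sum_congr rfl fun v _ => ?_
    simp [mul_ite, Finset.sum_ite_eq']
  have htot : A + B + D = (2*k-1) * (2*k-1) := by
    rw [hDalt, hA, hB, ← Finset.sum_add_distrib, ← Finset.sum_add_distrib]
    have : ∀ v : Fin k, (∑ w : Fin k, m v * (m w * (if w < v then 1 else 0)))
        + (∑ w : Fin k, m v * (m w * (if v < w then 1 else 0)))
        + (∑ w : Fin k, m v * (m w * (if w = v then 1 else 0)))
        = ∑ w : Fin k, m v * m w := by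
      intro v
      rw [← Finset.sum_add_distrib, ← Finset.sum_add_distrib]
      refine Finset.sum_congr rfl fun w _ => ?_
      rcases lt_trichotomy w v with h|h|h
      · simp [h, lt_asymm h, h.ne]
      · subst h; simp
      · simp [h, lt_asymm h, h.ne']
    rw [Finset.sum_congr rfl (fun v _ => this v), ← Finset.sum_mul_sum, hsum]
  have hDlow : 4*k-3 ≤ D := by
    rw [hD]
    have h1 : ∑ v : Fin k, 3 * m v ≤ ∑ v : Fin k, (m v * m v + 2) :=
      Finset.sum_le_sum fun v _ => three_le_sq (m v)
    rw [Finset.sum_add_distrib, Finset.sum_const, ← Finset.mul_sum, hsum] at h1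
    simp only [Finset.card_univ, Fintype.card_fin, smul_eq_mul] at h1
    clear_value m A B D
    clear hm hA hB hD hcard hrw step1 hAB hDalt htot hsum
    omega
  rw [hrw]
  rw [← hAB] at htot
  exact final_ineq hk htot hDlow

lemma glue {k n : ℕ} (hk : 2 ≤ k)
    (h : (2*k-1) * ((2*k-2) * (k-1)) ≤ n * (2*((k-1)*(k-1)))) : 2*k-1 ≤ n := by
  obtain ⟨j, rfl⟩ : ∃ j, k = j + 2 := ⟨k - 2, by omega⟩
  have e1 : 2*(j+2)-1 = 2*j+3 := by omega
  have e2 : 2*(j+2)-2 = 2*j+2 := by omega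
  have e3 : (j+2)-1 = j+1 := by omega
  rw [e1, e2, e3] at h
  rw [e1]
  by_contra hn
  push_neg at hn
  have hn' : n ≤ 2*j+2 := by omega
  nlinarith

/-- `n_k(2k-1, k-1) = 2k-1`: there is a `k`-ary `(k-2)`-EC-AUED code of length `2k-1`
and size `2k-1`, and no shorter one exists. -/
theorem stmt11 {k : ℕ} (hk : 2 ≤ k) :
    (∃ C : Finset (Fin (2 * k - 1) → Fin k), C.card = 2 * k - 1 ∧
      ∀ x ∈ C, ∀ y ∈ C, x ≠ y → k - 1 ≤ Ncount x y ∧ k - 1 ≤ Ncount y x) ∧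
    (∀ n : ℕ, ∀ C : Finset (Fin n → Fin k), C.card = 2 * k - 1 →
      (∀ x ∈ C, ∀ y ∈ C, x ≠ y → k - 1 ≤ Ncount x y ∧ k - 1 ≤ Ncount y x) →
      2 * k - 1 ≤ n) := by
  constructor
  · refine ⟨Finset.image (tentWord k hk) Finset.univ, ?_, ?_⟩
    · rw [Finset.card_image_of_injective _ (tentWord_inj hk), Finset.card_univ,
        Fintype.card_fin]
    · intro x hx y hy hxy
      simp only [Finset.mem_image, Finset.mem_univ, true_and] at hx hy
      obtain ⟨a, rfl⟩ := hx
      obtain ⟨b, rfl⟩ := hy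
      have hab : a ≠ b := fun h => hxy (by rw [h])
      exact ⟨tent_dist hk a b hab, tent_dist hk b a hab.symm⟩
  · intro n C hcard hC
    classical
    set S := ∑ x ∈ C, ∑ y ∈ C, Ncount x y with hS
    have hlow : (2*k-1) * ((2*k-2) * (k-1)) ≤ S := by
      have hx : ∀ x ∈ C, (2*k-2) * (k-1) ≤ ∑ y ∈ C, Ncount x y := by
        intro x hx
        have h2 : (C.erase x).card • (k-1) ≤ ∑ y ∈ C.erase x, Ncount x y :=
          Finset.card_nsmul_le_sum _ _ _ (fun y hy =>
            (hC x hx y (Finset.mem_of_mem_erase hy) (Finset.ne_of_mem_erase hy).symm).1)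
        rw [Finset.card_erase_of_mem hx, hcard, smul_eq_mul] at h2
        have h3 : ∑ y ∈ C.erase x, Ncount x y ≤ ∑ y ∈ C, Ncount x y :=
          Finset.sum_le_sum_of_subset (Finset.erase_subset _ _)
        have he : 2*k-1-1 = 2*k-2 := by omega
        rw [he] at h2
        omega
      have h4 : C.card • ((2*k-2) * (k-1)) ≤ S :=
        Finset.card_nsmul_le_sum _ _ _ hx
      rw [hcard, smul_eq_mul] at h4
      exact h4
    have hup : S ≤ n * (2*((k-1)*(k-1))) := by
      have hswap : S = ∑ i : Fin n, ∑ x ∈ C, ∑ y ∈ C, (if y i < x i then 1 else 0) := by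
        rw [hS]
        simp only [Ncount, Finset.card_filter]
        rw [Finset.sum_congr rfl (fun x _ => Finset.sum_comm), Finset.sum_comm]
      rw [hswap]
      calc ∑ i : Fin n, ∑ x ∈ C, ∑ y ∈ C, (if y i < x i then 1 else 0)
          ≤ ∑ _i : Fin n, 2*((k-1)*(k-1)) :=
            Finset.sum_le_sum (fun i _ => coord_bound hk C hcard i)
        _ = n * (2*((k-1)*(k-1))) := by
            rw [Finset.sum_const, Finset.card_univ, Fintype.card_fin, smul_eq_mul]
    exact glue hk (le_trans hlow hup)
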